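/- Assume b = A x̄ + z, let δ' ∈ (0,1) and γ > (1+δ')/(1−δ'), let s̃ ≥ 1 be an integer with ρ₋(A, s̄+s̃) > 0, and let λ > 0 satisfy λ ≥ max{4, (γ+1)/((1−δ')γ − (1+δ'))} · ‖Aᵀz‖_∞. Suppose x̂ ∈ ℝⁿ satisfies ‖x̂_{S̄ᶜ}‖₀ ≤ s̃ and ω_λ(x̂) ≤ ε for some ε with 0 ≤ ε ≤ δ'λ, and suppose x* is a minimizer of φ_λ with ‖x*_{S̄ᶜ}‖₀ ≤ s̃. Then φ_λ(x̂) − φ_λ(x*) ≤ 4(1+γ)λ s̄ ε / ρ₋(A, s̄+s̃). -/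

import Mathlib

open scoped BigOperators
open Matrix

noncomputable section

namespace PGH

/-- Euclidean dot product on `Fin n → ℝ`. -/
def dot {n : ℕ} (x y : Fin n → ℝ) : ℝ := ∑ i, x i * y i

/-- Squared Euclidean norm. -/
def sqnorm {n : ℕ} (x : Fin n → ℝ) : ℝ := ∑ i, (x i) ^ 2

/-- Euclidean (ℓ₂) norm. -/
noncomputable def l2 {n : ℕ} (x : Fin n → ℝ) : ℝ := Real.sqrt (sqnorm x)

/-- ℓ₁ norm. -/
def l1 {n : ℕ} (x : Fin n → ℝ) : ℝ := ∑ i, |x i|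

/-- ℓ∞ norm (maximum absolute coordinate). -/
noncomputable def linf {n : ℕ} (x : Fin n → ℝ) : ℝ := ⨆ i, |x i|

/-- Support of a vector. -/
def supp {n : ℕ} (x : Fin n → ℝ) : Finset (Fin n) := Finset.univ.filter (fun i => x i ≠ 0)

/-- Number of nonzero coordinates. -/
def l0 {n : ℕ} (x : Fin n → ℝ) : ℕ := (supp x).card

/-- Number of nonzero coordinates within the index set `S`
(i.e. `‖x_S‖₀` for the restriction of `x` to `S`). -/
def l0on {n : ℕ} (S : Finset (Fin n)) (x : Fin n → ℝ) : ℕ :=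
  (S.filter (fun i => x i ≠ 0)).card

/-- ℓ₁ norm of the restriction of `x` to the index set `S`. -/
def l1on {n : ℕ} (S : Finset (Fin n)) (x : Fin n → ℝ) : ℝ := ∑ i ∈ S, |x i|

/-- Gradient of `f(x) = (1/2)‖Ax - b‖₂²`, namely `Aᵀ(Ax - b)`. -/
def grad {m n : ℕ} (A : Matrix (Fin m) (Fin n) ℝ) (b : Fin m → ℝ) (x : Fin n → ℝ) :
    Fin n → ℝ :=
  Aᵀ.mulVec (A.mulVec x - b)

/-- Least-squares objective `f(x) = (1/2)‖Ax - b‖₂²`. -/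
def fls {m n : ℕ} (A : Matrix (Fin m) (Fin n) ℝ) (b : Fin m → ℝ) (x : Fin n → ℝ) : ℝ :=
  sqnorm (A.mulVec x - b) / 2

/-- ℓ₁-regularized least-squares objective `φ_λ(x) = f(x) + λ‖x‖₁`. -/
def phi {m n : ℕ} (A : Matrix (Fin m) (Fin n) ℝ) (b : Fin m → ℝ) (lam : ℝ)
    (x : Fin n → ℝ) : ℝ :=
  fls A b x + lam * l1 x

/-- Restricted maximal eigenvalue `ρ₊(A, s)`. -/
noncomputable def rhoPlus {m n : ℕ} (A : Matrix (Fin m) (Fin n) ℝ) (s : ℕ) : ℝ :=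
  sSup {r | ∃ x : Fin n → ℝ, x ≠ 0 ∧ l0 x ≤ s ∧ r = sqnorm (A.mulVec x) / sqnorm x}

/-- Restricted minimal eigenvalue `ρ₋(A, s)`. -/
noncomputable def rhoMinus {m n : ℕ} (A : Matrix (Fin m) (Fin n) ℝ) (s : ℕ) : ℝ :=
  sInf {r | ∃ x : Fin n → ℝ, x ≠ 0 ∧ l0 x ≤ s ∧ r = sqnorm (A.mulVec x) / sqnorm x}

/-- `ξ` is a subgradient of the ℓ₁ norm at `x`. -/
def IsSubgrad {n : ℕ} (x ξ : Fin n → ℝ) : Prop :=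
  ∀ i, (x i ≠ 0 → ξ i = Real.sign (x i)) ∧ (x i = 0 → |ξ i| ≤ 1)

/-- Optimality residue `ω_λ(x) = min_{ξ ∈ ∂‖x‖₁} ‖Aᵀ(Ax−b) + λξ‖_∞`. -/
noncomputable def omega {m n : ℕ} (A : Matrix (Fin m) (Fin n) ℝ) (b : Fin m → ℝ)
    (lam : ℝ) (x : Fin n → ℝ) : ℝ :=
  sInf {r | ∃ ξ : Fin n → ℝ, IsSubgrad x ξ ∧
    r = linf (fun i => grad A b x i + lam * ξ i)}

/-- The local model `ψ_{λ,L}(y; x)`. -/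
def psi {m n : ℕ} (A : Matrix (Fin m) (Fin n) ℝ) (b : Fin m → ℝ) (lam L : ℝ)
    (y x : Fin n → ℝ) : ℝ :=
  fls A b y + dot (grad A b y) (x - y) + L / 2 * sqnorm (x - y) + lam * l1 x

/-- The noise-domination condition
`λ ≥ max{4, (γ+1)/((1−δ')γ−(1+δ'))} ⬝ ‖Aᵀz‖_∞`. -/
def noiseCond {m n : ℕ} (A : Matrix (Fin m) (Fin n) ℝ) (z : Fin m → ℝ)
    (dp gam lam : ℝ) : Prop :=
  lam ≥ max 4 ((gam + 1) / ((1 - dp) * gam - (1 + dp))) * linf (Aᵀ.mulVec z)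

section Aux
lemma dot_transpose {m n : ℕ} (A : Matrix (Fin m) (Fin n) ℝ) (u : Fin m → ℝ) (v : Fin n → ℝ) :
    dot (Aᵀ.mulVec u) v = dot u (A.mulVec v) := by
  simp only [dot, Matrix.mulVec, dotProduct, Matrix.transpose_apply,
    Finset.sum_mul, Finset.mul_sum]
  rw [Finset.sum_comm]
  apply Finset.sum_congr rfl; intro i _; apply Finset.sum_congr rfl; intro j _; ring

lemma sqnorm_add {n : ℕ} (u v : Fin n → ℝ) :
    sqnorm (u + v) = sqnorm u + 2 * dot u v + sqnorm v := by
  simp only [sqnorm, dot, Pi.add_apply, Finset.mul_sum, ← Finset.sum_add_distrib]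
  apply Finset.sum_congr rfl; intro i _; ring

lemma dot_self {n : ℕ} (u : Fin n → ℝ) : dot u u = sqnorm u := by
  simp [dot, sqnorm, sq]

lemma fls_expand {m n : ℕ} (A : Matrix (Fin m) (Fin n) ℝ) (b : Fin m → ℝ) (x y : Fin n → ℝ) :
    fls A b y = fls A b x + dot (grad A b x) (y - x) + sqnorm (A.mulVec (y - x)) / 2 := by
  have h : A.mulVec y - b = (A.mulVec x - b) + A.mulVec (y - x) := by
    rw [Matrix.mulVec_sub]; abel
  rw [fls, h, sqnorm_add, grad, dot_transpose]
  rw [fls]; ring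

lemma grad_sub_grad {m n : ℕ} (A : Matrix (Fin m) (Fin n) ℝ) (b : Fin m → ℝ) (x y : Fin n → ℝ) :
    grad A b x - grad A b y = Aᵀ.mulVec (A.mulVec (x - y)) := by
  have h : (A.mulVec x - b) - (A.mulVec y - b) = A.mulVec (x - y) := by
    rw [Matrix.mulVec_sub]; abel
  rw [grad, grad, ← Matrix.mulVec_sub, h]


lemma sqnorm_nonneg {n : ℕ} (u : Fin n → ℝ) : 0 ≤ sqnorm u :=
  Finset.sum_nonneg fun i _ => sq_nonneg _

lemma l1on_nonneg {n : ℕ} (S : Finset (Fin n)) (u : Fin n → ℝ) : 0 ≤ l1on S u :=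
  Finset.sum_nonneg fun i _ => abs_nonneg _

lemma l1_split {n : ℕ} (S : Finset (Fin n)) (u : Fin n → ℝ) :
    l1 u = l1on S u + l1on Sᶜ u := by
  rw [l1, l1on, l1on, Finset.sum_add_sum_compl]

lemma dot_le_sum {n : ℕ} (u v : Fin n → ℝ) (c : ℝ) (h : ∀ i, |u i| ≤ c) :
    dot u v ≤ c * l1 v := by
  rw [dot, l1, Finset.mul_sum]
  apply Finset.sum_le_sum
  intro i _
  calc u i * v i ≤ |u i * v i| := le_abs_self _
    _ = |u i| * |v i| := abs_mul _ _
    _ ≤ c * |v i| := mul_le_mul_of_nonneg_right (h i) (abs_nonneg _)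

/-- The key inequality: for x with subgradient ξ and residual bounded by e. -/
lemma key {m n : ℕ} (A : Matrix (Fin m) (Fin n) ℝ) (b : Fin m → ℝ)
    (xbar : Fin n → ℝ) (z : Fin m → ℝ) (hb : b = A.mulVec xbar + z)
    (lam e nu : ℝ) (hlam : 0 ≤ lam)
    (hnu : ∀ i, |Aᵀ.mulVec z i| ≤ nu)
    (x ξ : Fin n → ℝ) (hξ : IsSubgrad x ξ)
    (hres : ∀ i, |grad A b x i + lam * ξ i| ≤ e) :
    sqnorm (A.mulVec (x - xbar)) ≤
      (lam + e + nu) * l1on (supp xbar) (x - xbar)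
        - (lam - e - nu) * l1on (supp xbar)ᶜ (x - xbar) := by
  set Δ := x - xbar with hΔ
  have hgbar : grad A b xbar = fun i => -(Aᵀ.mulVec z) i := by
    funext i
    rw [grad, hb]
    have : A.mulVec xbar - (A.mulVec xbar + z) = -z := by abel
    rw [this]
    simp [Matrix.mulVec_neg]
  have hid : sqnorm (A.mulVec Δ) = dot (fun i => grad A b x i + lam * ξ i) Δ
      - lam * dot ξ Δ + dot (Aᵀ.mulVec z) Δ := by
    have h1 : dot (grad A b x - grad A b xbar) Δ = sqnorm (A.mulVec Δ) := by
      rw [grad_sub_grad, dot_transpose, dot_self]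
    rw [← h1, hgbar]
    simp only [dot, Pi.sub_apply, Finset.mul_sum, ← Finset.sum_add_distrib,
      ← Finset.sum_sub_distrib]
    apply Finset.sum_congr rfl; intro i _; ring
  have hxi : dot ξ Δ ≥ l1on (supp xbar)ᶜ Δ - l1on (supp xbar) Δ := by
    have hsplit : dot ξ Δ = (∑ i ∈ supp xbar, ξ i * Δ i) + ∑ i ∈ (supp xbar)ᶜ, ξ i * Δ i := by
      rw [dot, Finset.sum_add_sum_compl]
    rw [hsplit]
    have h1 : ∑ i ∈ supp xbar, ξ i * Δ i ≥ -(l1on (supp xbar) Δ) := by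
      rw [l1on, ← Finset.sum_neg_distrib]
      apply Finset.sum_le_sum
      intro i _
      have habs : |ξ i| ≤ 1 := by
        rcases eq_or_ne (x i) 0 with h | h
        · exact (hξ i).2 h
        · rw [(hξ i).1 h]
          rcases lt_trichotomy (x i) 0 with hh | hh | hh
          · rw [Real.sign_of_neg hh]; norm_num
          · exact absurd hh h
          · rw [Real.sign_of_pos hh]; norm_num
      have := neg_abs_le (ξ i * Δ i)
      have h2 : |ξ i * Δ i| ≤ |Δ i| := by
        rw [abs_mul]
        calc |ξ i| * |Δ i| ≤ 1 * |Δ i| := mul_le_mul_of_nonneg_right habs (abs_nonneg _)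
          _ = |Δ i| := one_mul _
      linarith
    have h2 : ∑ i ∈ (supp xbar)ᶜ, ξ i * Δ i = l1on (supp xbar)ᶜ Δ := by
      rw [l1on]
      apply Finset.sum_congr rfl
      intro i hi
      have hxb : xbar i = 0 := by
        simp only [supp, Finset.mem_compl, Finset.mem_filter, Finset.mem_univ,
          true_and, not_not] at hi
        exact hi
      have hΔi : Δ i = x i := by simp [hΔ, hxb]
      rw [hΔi]
      rcases eq_or_ne (x i) 0 with h | h
      · simp [h]
      · rw [(hξ i).1 h]
        rcases lt_trichotomy (x i) 0 with hh | hh | hh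
        · rw [Real.sign_of_neg hh, abs_of_neg hh]; ring
        · exact absurd hh h
        · rw [Real.sign_of_pos hh, abs_of_pos hh]; ring
    linarith
  have hd1 : dot (fun i => grad A b x i + lam * ξ i) Δ ≤ e * l1 Δ :=
    dot_le_sum _ _ e hres
  have hd2 : dot (Aᵀ.mulVec z) Δ ≤ nu * l1 Δ := dot_le_sum _ _ nu hnu
  have hsplit := l1_split (supp xbar) Δ
  have hm : lam * (l1on (supp xbar)ᶜ Δ - l1on (supp xbar) Δ) ≤ lam * dot ξ Δ :=
    mul_le_mul_of_nonneg_left hxi hlam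
  have h4 : e * l1 Δ + nu * l1 Δ = (e + nu) * l1on (supp xbar) Δ + (e + nu) * l1on (supp xbar)ᶜ Δ := by
    rw [hsplit]; ring
  linarith


lemma sqnorm_pos {n : ℕ} (u : Fin n → ℝ) (hu : u ≠ 0) : 0 < sqnorm u := by
  rcases Function.ne_iff.mp hu with ⟨i, hi⟩
  have : (0:ℝ) < (u i)^2 := by
    have : u i ≠ 0 := by simpa using hi
    positivity
  calc (0:ℝ) < (u i)^2 := this
    _ ≤ sqnorm u := Finset.single_le_sum (f := fun j => (u j)^2)
        (fun j _ => sq_nonneg _) (Finset.mem_univ i)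

lemma rho_le {m n : ℕ} (A : Matrix (Fin m) (Fin n) ℝ) (s : ℕ) (u : Fin n → ℝ)
    (hsp : l0 u ≤ s) :
    rhoMinus A s * sqnorm u ≤ sqnorm (A.mulVec u) := by
  rcases eq_or_ne u 0 with h | h
  · subst h
    simp [sqnorm, Matrix.mulVec_zero]
  · have hpos : 0 < sqnorm u := sqnorm_pos u h
    have hmem : sqnorm (A.mulVec u) / sqnorm u ∈
        {r | ∃ x : Fin n → ℝ, x ≠ 0 ∧ l0 x ≤ s ∧ r = sqnorm (A.mulVec x) / sqnorm x} :=
      ⟨u, h, hsp, rfl⟩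
    have hbdd : BddBelow {r | ∃ x : Fin n → ℝ, x ≠ 0 ∧ l0 x ≤ s ∧
        r = sqnorm (A.mulVec x) / sqnorm x} := by
      refine ⟨0, fun r hr => ?_⟩
      rcases hr with ⟨x, hx, _, rfl⟩
      exact div_nonneg (sqnorm_nonneg _) (sqnorm_nonneg _)
    have hle : rhoMinus A s ≤ sqnorm (A.mulVec u) / sqnorm u := csInf_le hbdd hmem
    calc rhoMinus A s * sqnorm u ≤ (sqnorm (A.mulVec u) / sqnorm u) * sqnorm u :=
          mul_le_mul_of_nonneg_right hle hpos.le
      _ = sqnorm (A.mulVec u) := div_mul_cancel₀ _ hpos.ne'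

lemma sparse_diff {n : ℕ} (xbar x : Fin n → ℝ) (st : ℕ)
    (hsp : l0on (supp xbar)ᶜ x ≤ st) :
    l0 (x - xbar) ≤ (supp xbar).card + st := by
  have hsub : supp (x - xbar) ⊆ supp xbar ∪ (supp xbar)ᶜ.filter (fun i => x i ≠ 0) := by
    intro i hi
    simp only [supp, Finset.mem_filter, Finset.mem_univ, true_and] at hi
    by_cases hS : i ∈ supp xbar
    · exact Finset.mem_union_left _ hS
    · have hxb : xbar i = 0 := by
        simp only [supp, Finset.mem_filter, Finset.mem_univ, true_and, not_not] at hS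
        exact hS
      refine Finset.mem_union_right _ ?_
      rw [Finset.mem_filter]
      refine ⟨Finset.mem_compl.mpr hS, ?_⟩
      intro hx0
      apply hi
      simp [hx0, hxb]
  calc l0 (x - xbar) ≤ (supp xbar ∪ (supp xbar)ᶜ.filter (fun i => x i ≠ 0)).card :=
        Finset.card_le_card hsub
    _ ≤ (supp xbar).card + ((supp xbar)ᶜ.filter (fun i => x i ≠ 0)).card :=
        Finset.card_union_le _ _
    _ ≤ (supp xbar).card + st := by
        exact Nat.add_le_add_left hsp _

lemma cauchy_S {n : ℕ} (S : Finset (Fin n)) (u : Fin n → ℝ) :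
    (l1on S u)^2 ≤ (S.card : ℝ) * sqnorm u := by
  have h1 : (l1on S u)^2 ≤ (S.card : ℝ) * ∑ i ∈ S, |u i|^2 :=
    sq_sum_le_card_mul_sum_sq
  have h2 : ∑ i ∈ S, |u i|^2 ≤ sqnorm u := by
    rw [sqnorm]
    have heq : ∀ i ∈ S, |u i|^2 = (u i)^2 := fun i _ => sq_abs _
    rw [Finset.sum_congr rfl heq]
    exact Finset.sum_le_sum_of_subset_of_nonneg (Finset.subset_univ S)
      (fun i _ _ => sq_nonneg _)
  calc (l1on S u)^2 ≤ (S.card : ℝ) * ∑ i ∈ S, |u i|^2 := h1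
    _ ≤ (S.card : ℝ) * sqnorm u := mul_le_mul_of_nonneg_left h2 (Nat.cast_nonneg _)

set_option maxHeartbeats 1000000 in
/-- Combined bound: `‖x - x̄‖₁ ≤ (1+γ)(λ+e+ν)s̄/ρ` under the cone/noise conditions. -/
lemma bound1 {m n : ℕ} (A : Matrix (Fin m) (Fin n) ℝ) (b : Fin m → ℝ)
    (xbar : Fin n → ℝ) (z : Fin m → ℝ) (hb : b = A.mulVec xbar + z)
    (dp gam : ℝ) (hdp0 : 0 < dp) (hdp1 : dp < 1) (hgam1 : 1 < gam)
    (st : ℕ) (hrho : 0 < rhoMinus A ((supp xbar).card + st))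
    (lam e nu : ℝ) (hlam : 0 < lam) (he0 : 0 ≤ e) (helam : e ≤ dp * lam)
    (hnu0 : 0 ≤ nu) (hnu4 : 4 * nu ≤ lam)
    (hnuD : (gam + 1) * nu ≤ ((1 - dp) * gam - (1 + dp)) * lam)
    (hnu : ∀ i, |Aᵀ.mulVec z i| ≤ nu)
    (x ξ : Fin n → ℝ) (hξ : IsSubgrad x ξ)
    (hres : ∀ i, |grad A b x i + lam * ξ i| ≤ e)
    (hsp : l0on (supp xbar)ᶜ x ≤ st) :
    l1 (x - xbar) ≤
      (1 + gam) * ((lam + e + nu) * ((supp xbar).card : ℝ) /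
        rhoMinus A ((supp xbar).card + st)) := by
  set S := supp xbar with hS
  set Δ := x - xbar with hΔ
  set sv := l1on S Δ with hsv
  set cv := l1on Sᶜ Δ with hcv
  have hsv0 : 0 ≤ sv := l1on_nonneg _ _
  have hcv0 : 0 ≤ cv := l1on_nonneg _ _
  have hkey := key A b xbar z hb lam e nu hlam.le hnu x ξ hξ hres
  have hAΔ0 : 0 ≤ sqnorm (A.mulVec Δ) := sqnorm_nonneg _
  -- positivity of lam - e - nu
  have hpos : 0 < lam - e - nu := by nlinarith
  -- cone condition
  have hratio : lam + e + nu ≤ gam * (lam - e - nu) := by nlinarith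
  have hcone : cv ≤ gam * sv := by
    have h1 : (lam - e - nu) * cv ≤ (lam + e + nu) * sv := by
      have := hkey; linarith
    have h2 : (lam + e + nu) * sv ≤ gam * (lam - e - nu) * sv := by
      exact mul_le_mul_of_nonneg_right hratio hsv0
    nlinarith
  -- S bound
  set ρ := rhoMinus A (S.card + st) with hρ
  have hsparse : l0 Δ ≤ S.card + st := sparse_diff xbar x st hsp
  have hrholeq : ρ * sqnorm Δ ≤ sqnorm (A.mulVec Δ) := rho_le A _ Δ hsparse
  have hcs : sv^2 ≤ (S.card : ℝ) * sqnorm Δ := cauchy_S S Δ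
  have hsb : sv ≤ (lam + e + nu) * (S.card : ℝ) / ρ := by
    have hchain : ρ * sv^2 ≤ (S.card : ℝ) * ((lam + e + nu) * sv) := by
      have h1 : ρ * sv^2 ≤ ρ * ((S.card : ℝ) * sqnorm Δ) :=
        mul_le_mul_of_nonneg_left hcs hrho.le
      have h2 : (S.card : ℝ) * (ρ * sqnorm Δ) ≤ (S.card : ℝ) * sqnorm (A.mulVec Δ) :=
        mul_le_mul_of_nonneg_left hrholeq (Nat.cast_nonneg _)
      have h3 : sqnorm (A.mulVec Δ) ≤ (lam + e + nu) * sv := by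
        have hdrop : 0 ≤ (lam - e - nu) * cv := mul_nonneg hpos.le hcv0
        linarith
      have h4 : (S.card : ℝ) * sqnorm (A.mulVec Δ) ≤ (S.card : ℝ) * ((lam + e + nu) * sv) :=
        mul_le_mul_of_nonneg_left h3 (Nat.cast_nonneg _)
      nlinarith
    rcases eq_or_lt_of_le hsv0 with h0 | h0
    · rw [← h0]
      positivity
    · rw [le_div_iff₀ hrho]
      nlinarith
  have hl1 : l1 Δ = sv + cv := l1_split S Δ
  have h1g : (0:ℝ) ≤ 1 + gam := by linarith
  calc l1 Δ = sv + cv := hl1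
    _ ≤ (1 + gam) * sv := by nlinarith
    _ ≤ (1 + gam) * ((lam + e + nu) * ((supp xbar).card : ℝ) / ρ) :=
        mul_le_mul_of_nonneg_left hsb h1g

lemma l1_subgrad {n : ℕ} (x ξ y : Fin n → ℝ) (hξ : IsSubgrad x ξ) :
    l1 x + dot ξ (y - x) ≤ l1 y := by
  rw [l1, l1, dot, ← Finset.sum_add_distrib]
  apply Finset.sum_le_sum
  intro i _
  rcases eq_or_ne (x i) 0 with h | h
  · have habs : |ξ i| ≤ 1 := (hξ i).2 h
    have : ξ i * (y i - x i) ≤ |y i| := by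
      rw [h, sub_zero]
      calc ξ i * y i ≤ |ξ i * y i| := le_abs_self _
        _ = |ξ i| * |y i| := abs_mul _ _
        _ ≤ 1 * |y i| := mul_le_mul_of_nonneg_right habs (abs_nonneg _)
        _ = |y i| := one_mul _
    rw [h]; simpa using this
  · rw [(hξ i).1 h]
    rcases lt_trichotomy (x i) 0 with hh | hh | hh
    · rw [Real.sign_of_neg hh, abs_of_neg hh]
      have := neg_abs_le (y i)
      simp only [Pi.sub_apply]
      nlinarith [neg_abs_le (y i)]
    · exact absurd hh h
    · rw [Real.sign_of_pos hh, abs_of_pos hh]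
      simp only [Pi.sub_apply]
      nlinarith [le_abs_self (y i)]

lemma gap_le {m n : ℕ} (A : Matrix (Fin m) (Fin n) ℝ) (b : Fin m → ℝ) (lam : ℝ)
    (hlam : 0 ≤ lam) (x ξ u : Fin n → ℝ) (hξ : IsSubgrad x ξ) :
    phi A b lam x - phi A b lam u ≤ dot (fun i => grad A b x i + lam * ξ i) (x - u) := by
  have hf : fls A b u = fls A b x + dot (grad A b x) (u - x) + sqnorm (A.mulVec (u - x)) / 2 :=
    fls_expand A b x u
  have hq : 0 ≤ sqnorm (A.mulVec (u - x)) := sqnorm_nonneg _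
  have hl : l1 x + dot ξ (u - x) ≤ l1 u := l1_subgrad x ξ u hξ
  have hl2 : lam * (l1 x + dot ξ (u - x)) ≤ lam * l1 u := mul_le_mul_of_nonneg_left hl hlam
  have hdot1 : dot (fun i => grad A b x i + lam * ξ i) (x - u)
      = - dot (grad A b x) (u - x) - lam * dot ξ (u - x) := by
    simp only [dot, Pi.sub_apply, Finset.mul_sum, ← Finset.sum_neg_distrib,
      ← Finset.sum_sub_distrib]
    apply Finset.sum_congr rfl; intro i _; ring
  rw [phi, phi, hdot1]
  nlinarith

lemma l1_tri {n : ℕ} (x y w : Fin n → ℝ) : l1 (x - y) ≤ l1 (x - w) + l1 (w - y) := by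
  rw [l1, l1, l1, ← Finset.sum_add_distrib]
  apply Finset.sum_le_sum
  intro i _
  simp only [Pi.sub_apply]
  calc |x i - y i| = |(x i - w i) + (w i - y i)| := by ring_nf
    _ ≤ |x i - w i| + |w i - y i| := abs_add_le _ _


lemma l1_update {n : ℕ} (x : Fin n → ℝ) (i : Fin n) (v : ℝ) :
    l1 (Function.update x i v) = l1 x - |x i| + |v| := by
  have h1 : l1 (Function.update x i v)
      = |v| + ∑ j ∈ Finset.univ \ {i}, |x j| := by
    rw [l1]
    have hc : ∑ j, |Function.update x i v j|
        = ∑ j, Function.update (fun j => |x j|) i |v| j := by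
      apply Finset.sum_congr rfl
      intro j _
      rcases eq_or_ne j i with h | h
      · subst h; simp
      · simp [Function.update_of_ne h]
    rw [hc]
    exact Finset.sum_update_of_mem (Finset.mem_univ i) (fun j => |x j|) |v|
  have h2 : l1 x = |x i| + ∑ j ∈ Finset.univ \ {i}, |x j| := by
    rw [l1, ← Finset.sum_erase_add _ _ (Finset.mem_univ i), Finset.sdiff_singleton_eq_erase]
    ring
  rw [h1, h2]; ring

lemma perturb {m n : ℕ} (A : Matrix (Fin m) (Fin n) ℝ) (b : Fin m → ℝ) (lam : ℝ)
    (x : Fin n → ℝ) (i : Fin n) (t : ℝ) :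
    phi A b lam (Function.update x i (x i + t)) =
      phi A b lam x + t * grad A b x i
        + t^2 * sqnorm (A.mulVec (Pi.single i 1)) / 2
        + lam * (|x i + t| - |x i|) := by
  set u := Function.update x i (x i + t) with hu
  have hux : u - x = Pi.single i t := by
    funext j
    rcases eq_or_ne j i with h | h
    · subst h; simp [hu]
    · simp [hu, Function.update_of_ne h, Pi.single_eq_of_ne h]
  have hsq : sqnorm (A.mulVec (u - x)) = t^2 * sqnorm (A.mulVec (Pi.single i 1)) := by
    rw [hux, Matrix.mulVec_single, Matrix.mulVec_single, sqnorm, sqnorm, Finset.mul_sum]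
    apply Finset.sum_congr rfl
    intro j _
    simp only [Pi.smul_apply, op_smul_eq_mul, Matrix.col_apply]; ring
  have hdotg : dot (grad A b x) (u - x) = t * grad A b x i := by
    rw [hux, dot]
    rw [Finset.sum_eq_single i]
    · simp [mul_comm]
    · intro j _ hj; simp [Pi.single_eq_of_ne hj]
    · intro h; exact absurd (Finset.mem_univ i) h
  have hl1 : l1 u = l1 x - |x i| + |x i + t| := l1_update x i (x i + t)
  rw [phi, phi, fls_expand A b x u, hdotg, hsq, hl1]
  ring


lemma small_le {a K X : ℝ} (ha : 0 < a) (hK : 0 ≤ K)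
    (h : ∀ s, 0 < s → s < a → X ≤ s * K) : X ≤ 0 := by
  by_contra hX
  push_neg at hX
  set s := min (a/2) (X/(K+1)) with hs
  have hs0 : 0 < s := lt_min (by linarith) (by positivity)
  have hsa : s < a := lt_of_le_of_lt (min_le_left _ _) (by linarith)
  have h1 := h s hs0 hsa
  have hsK : s * K ≤ (X/(K+1)) * K := mul_le_mul_of_nonneg_right (min_le_right _ _) hK
  have h2 : (X/(K+1))*K < X := by
    rw [div_mul_eq_mul_div, div_lt_iff₀ (by linarith)]
    nlinarith
  linarith

lemma kkt {m n : ℕ} (A : Matrix (Fin m) (Fin n) ℝ) (b : Fin m → ℝ) (lam : ℝ)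
    (hlam : 0 < lam) (x : Fin n → ℝ)
    (hmin : ∀ u, phi A b lam x ≤ phi A b lam u) :
    ∃ ξ, IsSubgrad x ξ ∧ ∀ i, grad A b x i + lam * ξ i = 0 := by
  have hQ : ∀ (i : Fin n) (t : ℝ),
      0 ≤ t * grad A b x i + t^2 * sqnorm (A.mulVec (Pi.single i 1)) / 2
        + lam * (|x i + t| - |x i|) := by
    intro i t
    have := hmin (Function.update x i (x i + t))
    rw [perturb A b lam x i t] at this
    linarith
  have hkey : ∀ i, (x i ≠ 0 → grad A b x i = -lam * Real.sign (x i))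
      ∧ (x i = 0 → |grad A b x i| ≤ lam) := by
    intro i
    set g := grad A b x i with hg
    set c := sqnorm (A.mulVec (Pi.single i 1)) with hc
    have hc0 : 0 ≤ c := sqnorm_nonneg _
    constructor
    · intro hx
      rcases lt_trichotomy (x i) 0 with hh | hh | hh
      · -- x i < 0, sign = -1, show g = lam
        rw [Real.sign_of_neg hh]
        have h1 : g - lam ≤ 0 := by
          apply small_le (a := -(x i)) (by linarith) (K := c/2) (div_nonneg hc0 (by norm_num))
          intro s hs0 hsa
          have := hQ i (-s)
          have habs1 : |x i + -s| = -(x i) + s := by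
            rw [abs_of_neg (by linarith)]; ring
          have habs2 : |x i| = -(x i) := abs_of_neg hh
          rw [habs1, habs2] at this
          nlinarith
        have h2 : -(g - lam) ≤ 0 := by
          apply small_le (a := -(x i)) (by linarith) (K := c/2) (div_nonneg hc0 (by norm_num))
          intro s hs0 hsa
          have := hQ i s
          have habs1 : |x i + s| = -(x i) - s := by
            rw [abs_of_neg (by linarith)]; ring
          have habs2 : |x i| = -(x i) := abs_of_neg hh
          rw [habs1, habs2] at this
          nlinarith
        have : g = lam := by linarith
        rw [this]; ring
      · exact absurd hh hx
      · -- x i > 0, sign = 1, show g = -lam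
        rw [Real.sign_of_pos hh]
        have h1 : g + lam ≤ 0 := by
          apply small_le (a := x i) hh (K := c/2) (div_nonneg hc0 (by norm_num))
          intro s hs0 hsa
          have := hQ i (-s)
          have habs1 : |x i + -s| = x i - s := by
            rw [abs_of_pos (by linarith)]; ring
          have habs2 : |x i| = x i := abs_of_pos hh
          rw [habs1, habs2] at this
          nlinarith
        have h2 : -(g + lam) ≤ 0 := by
          apply small_le (a := x i) hh (K := c/2) (div_nonneg hc0 (by norm_num))
          intro s hs0 hsa
          have := hQ i s
          have habs1 : |x i + s| = x i + s := by
            rw [abs_of_pos (by linarith)]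
          have habs2 : |x i| = x i := abs_of_pos hh
          rw [habs1, habs2] at this
          nlinarith
        have : g = -lam := by linarith
        rw [this]; ring
    · intro hx
      have h1 : g - lam ≤ 0 := by
        apply small_le (a := (1:ℝ)) one_pos (K := c/2) (div_nonneg hc0 (by norm_num))
        intro s hs0 hsa
        have := hQ i (-s)
        rw [hx] at this
        have habs : |(0:ℝ) + -s| = s := by rw [zero_add, abs_neg, abs_of_pos hs0]
        rw [habs] at this
        simp only [abs_zero, sub_zero] at this
        nlinarith
      have h2 : -g - lam ≤ 0 := by
        apply small_le (a := (1:ℝ)) one_pos (K := c/2) (div_nonneg hc0 (by norm_num))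
        intro s hs0 hsa
        have := hQ i s
        rw [hx] at this
        have habs : |(0:ℝ) + s| = s := by rw [zero_add, abs_of_pos hs0]
        rw [habs] at this
        simp only [abs_zero, sub_zero] at this
        nlinarith
      rw [abs_le]; constructor <;> linarith
  refine ⟨fun i => -(grad A b x i) / lam, ?_, ?_⟩
  · intro i
    constructor
    · intro hx
      show -(grad A b x i) / lam = Real.sign (x i)
      rw [(hkey i).1 hx]
      field_simp
    · intro hx
      have := (hkey i).2 hx
      rw [abs_div, abs_neg, abs_of_pos hlam, div_le_one hlam]
      exact this
  · intro i
    show grad A b x i + lam * (-(grad A b x i) / lam) = 0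
    field_simp
    ring


lemma attain {m n : ℕ} (A : Matrix (Fin m) (Fin n) ℝ) (b : Fin m → ℝ) (lam : ℝ)
    (hlam : 0 < lam) (x : Fin n → ℝ) (eps : ℝ) (heps : omega A b lam x ≤ eps) :
    ∃ ξ, IsSubgrad x ξ ∧ ∀ i, |grad A b x i + lam * ξ i| ≤ eps := by
  classical
  set g : Fin n → ℝ := grad A b x with hgdef
  set ξ0 : Fin n → ℝ := fun i =>
    if x i ≠ 0 then Real.sign (x i) else max (-1) (min 1 (-(g i)/lam)) with hξ0
  have hsub : IsSubgrad x ξ0 := by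
    intro i
    constructor
    · intro hx; simp [hξ0, hx]
    · intro hx
      simp only [hξ0, hx, ne_eq, not_true_eq_false, if_false, not_not]
      rw [abs_le]
      constructor
      · exact le_max_left _ _
      · exact max_le (by norm_num) (min_le_left _ _)
  have hptw : ∀ ξ : Fin n → ℝ, IsSubgrad x ξ → ∀ i,
      |g i + lam * ξ0 i| ≤ |g i + lam * ξ i| := by
    intro ξ hξ i
    rcases eq_or_ne (x i) 0 with hx | hx
    · have hξ0i : ξ0 i = max (-1) (min 1 (-(g i)/lam)) := by simp [hξ0, hx]
      have hξi : |ξ i| ≤ 1 := (hξ i).2 hx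
      have hξi1 : -1 ≤ ξ i := neg_le_of_abs_le hξi
      have hξi2 : ξ i ≤ 1 := le_of_abs_le hξi
      rcases le_or_gt (|g i|) lam with hg | hg
      · have h1 : -1 ≤ -(g i)/lam := by
          rw [le_div_iff₀ hlam]
          have := le_of_abs_le hg
          linarith
        have h2 : -(g i)/lam ≤ 1 := by
          rw [div_le_one hlam]
          have := neg_le_abs (g i)
          linarith
        have : ξ0 i = -(g i)/lam := by
          rw [hξ0i, min_eq_right h2, max_eq_right h1]
        rw [this]
        have : g i + lam * (-(g i)/lam) = 0 := by field_simp; ring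
        rw [this, abs_zero]
        exact abs_nonneg _
      · rcases le_or_gt 0 (g i) with hgs | hgs
        · -- g i > lam
          have hgl : lam < g i := by rwa [abs_of_nonneg hgs] at hg
          have h2 : -(g i)/lam < -1 := by
            rw [div_lt_iff₀ hlam]
            linarith
          have hmin : min 1 (-(g i)/lam) = -(g i)/lam := by
            apply min_eq_right; linarith
          have : ξ0 i = -1 := by
            rw [hξ0i, hmin, max_eq_left h2.le]
          rw [this]
          have hv : g i + lam * (-1) = g i - lam := by ring
          rw [hv, abs_of_pos (by linarith)]
          calc g i - lam ≤ g i + lam * ξ i := by nlinarith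
            _ ≤ |g i + lam * ξ i| := le_abs_self _
        · -- g i < -lam
          have hgl : g i < -lam := by
            rw [abs_of_neg hgs] at hg; linarith
          have h1 : 1 < -(g i)/lam := by
            rw [lt_div_iff₀ hlam]; linarith
          have hmin : min 1 (-(g i)/lam) = 1 := min_eq_left h1.le
          have : ξ0 i = 1 := by
            rw [hξ0i, hmin]
            exact max_eq_right (by norm_num)
          rw [this]
          have hv : g i + lam * 1 = g i + lam := by ring
          rw [hv, abs_of_neg (by linarith)]
          calc -(g i + lam) ≤ -(g i + lam * ξ i) := by nlinarith
            _ ≤ |g i + lam * ξ i| := neg_le_abs _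
    · have h1 : ξ0 i = Real.sign (x i) := by simp [hξ0, hx]
      have h2 : ξ i = Real.sign (x i) := (hξ i).1 hx
      rw [h1, ← h2]
  rcases isEmpty_or_nonempty (Fin n) with hemp | hne
  · exact ⟨ξ0, hsub, fun i => (hemp.elim i)⟩
  have hbdd : ∀ ξ : Fin n → ℝ, BddAbove (Set.range fun i => |g i + lam * ξ i|) :=
    fun ξ => Set.Finite.bddAbove (Set.finite_range _)
  have hval : ∀ ξ : Fin n → ℝ, IsSubgrad x ξ →
      linf (fun i => g i + lam * ξ0 i) ≤ linf (fun i => g i + lam * ξ i) := by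
    intro ξ hξ
    exact ciSup_mono (hbdd ξ) (hptw ξ hξ)
  have hlb : linf (fun i => g i + lam * ξ0 i) ≤ omega A b lam x := by
    apply le_csInf
    · exact ⟨_, ξ0, hsub, rfl⟩
    · rintro r ⟨ξ, hξ, rfl⟩
      exact hval ξ hξ
  refine ⟨ξ0, hsub, fun i => ?_⟩
  calc |grad A b x i + lam * ξ0 i| ≤ linf (fun i => g i + lam * ξ0 i) :=
        le_ciSup (hbdd ξ0) i
    _ ≤ eps := hlb.trans heps


end Aux

theorem stmt19 {m n : ℕ} (A : Matrix (Fin m) (Fin n) ℝ) (b : Fin m → ℝ)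
    (xbar : Fin n → ℝ) (z : Fin m → ℝ) (hb : b = A.mulVec xbar + z)
    (dp gam : ℝ) (hdp0 : 0 < dp) (hdp1 : dp < 1)
    (hgam : gam > (1 + dp) / (1 - dp))
    (st : ℕ) (hst : 1 ≤ st)
    (hrho : 0 < rhoMinus A ((supp xbar).card + st))
    (lam : ℝ) (hlam : 0 < lam) (hnoise : noiseCond A z dp gam lam)
    (eps : ℝ) (heps0 : 0 ≤ eps) (heps1 : eps ≤ dp * lam)
    (xhat : Fin n → ℝ) (hsp : l0on (supp xbar)ᶜ xhat ≤ st)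
    (homega : omega A b lam xhat ≤ eps)
    (xstar : Fin n → ℝ) (hmin : ∀ u, phi A b lam xstar ≤ phi A b lam u)
    (hspstar : l0on (supp xbar)ᶜ xstar ≤ st) :
    phi A b lam xhat - phi A b lam xstar ≤
      4 * (1 + gam) * lam * ((supp xbar).card : ℝ) * eps /
        rhoMinus A ((supp xbar).card + st) := by

  have h1dp : (0:ℝ) < 1 - dp := by linarith
  have hgam1 : (1:ℝ) < gam := by
    have h : (1:ℝ) < (1 + dp) / (1 - dp) := by
      rw [lt_div_iff₀ h1dp]; linarith
    linarith
  have hD : 0 < (1 - dp) * gam - (1 + dp) := by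
    have := (div_lt_iff₀ h1dp).mp hgam
    nlinarith
  set ν := linf (Aᵀ.mulVec z) with hν
  have hnu0 : 0 ≤ ν := by
    rw [hν, linf]
    exact Real.iSup_nonneg (fun i => abs_nonneg _)
  have hnui : ∀ i, |Aᵀ.mulVec z i| ≤ ν := by
    intro i
    rw [hν, linf]
    exact le_ciSup (f := fun j => |Aᵀ.mulVec z j|)
      (Set.Finite.bddAbove (Set.finite_range _)) i
  have hnu4 : 4 * ν ≤ lam := by
    have h1 : (4:ℝ) ≤ max 4 ((gam + 1) / ((1 - dp) * gam - (1 + dp))) := le_max_left _ _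
    have h2 : 4 * ν ≤ max 4 ((gam + 1) / ((1 - dp) * gam - (1 + dp))) * ν :=
      mul_le_mul_of_nonneg_right h1 hnu0
    exact h2.trans hnoise
  have hnuD : (gam + 1) * ν ≤ ((1 - dp) * gam - (1 + dp)) * lam := by
    have h1 : (gam + 1) / ((1 - dp) * gam - (1 + dp))
        ≤ max 4 ((gam + 1) / ((1 - dp) * gam - (1 + dp))) := le_max_right _ _
    have h2 : (gam + 1) / ((1 - dp) * gam - (1 + dp)) * ν ≤ lam :=
      (mul_le_mul_of_nonneg_right h1 hnu0).trans hnoise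
    have h3 := mul_le_mul_of_nonneg_right h2 hD.le
    have h4 : (gam + 1) / ((1 - dp) * gam - (1 + dp)) * ν * ((1 - dp) * gam - (1 + dp))
        = (gam + 1) * ν := by
      field_simp
      exact mul_div_cancel_left₀ ν (show (0:ℝ) < gam * (1 - dp) - (1 + dp) by linarith).ne'
    rw [h4] at h3
    linarith
  obtain ⟨ξh, hξh, hresh⟩ := attain A b lam hlam xhat eps homega
  obtain ⟨ξs, hξs, hkkts⟩ := kkt A b lam hlam xstar hmin
  have hress : ∀ i, |grad A b xstar i + lam * ξs i| ≤ 0 := by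
    intro i; rw [hkkts i]; simp
  have hB1 := bound1 A b xbar z hb dp gam hdp0 hdp1 hgam1 st hrho lam eps ν hlam
    heps0 heps1 hnu0 hnu4 hnuD hnui xhat ξh hξh hresh hsp
  have hB2 := bound1 A b xbar z hb dp gam hdp0 hdp1 hgam1 st hrho lam 0 ν hlam
    le_rfl (by positivity) hnu0 hnu4 hnuD hnui xstar ξs hξs hress hspstar
  have hgap := gap_le A b lam hlam.le xhat ξh xstar hξh
  have hdotb : dot (fun i => grad A b xhat i + lam * ξh i) (xhat - xstar)
      ≤ eps * l1 (xhat - xstar) := dot_le_sum _ _ eps hresh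
  have htri : l1 (xhat - xstar) ≤ l1 (xhat - xbar) + l1 (xstar - xbar) := by
    have h := l1_tri xhat xstar xbar
    have heq : l1 (xbar - xstar) = l1 (xstar - xbar) := by
      rw [l1, l1]
      apply Finset.sum_congr rfl
      intro i _
      simp only [Pi.sub_apply]
      exact abs_sub_comm _ _
    rw [heq] at h
    exact h
  set ρ := rhoMinus A ((supp xbar).card + st) with hρ
  set sb := ((supp xbar).card : ℝ) with hsb
  have hsb0 : (0:ℝ) ≤ sb := Nat.cast_nonneg _
  have h1g : (0:ℝ) ≤ 1 + gam := by linarith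
  have hsum : l1 (xhat - xbar) + l1 (xstar - xbar)
      ≤ (1 + gam) * ((lam + eps + ν) * sb / ρ) + (1 + gam) * ((lam + 0 + ν) * sb / ρ) := by
    exact add_le_add hB1 hB2
  have hstep : phi A b lam xhat - phi A b lam xstar
      ≤ eps * ((1 + gam) * ((lam + eps + ν) * sb / ρ) + (1 + gam) * ((lam + 0 + ν) * sb / ρ)) := by
    calc phi A b lam xhat - phi A b lam xstar
        ≤ dot (fun i => grad A b xhat i + lam * ξh i) (xhat - xstar) := hgap
      _ ≤ eps * l1 (xhat - xstar) := hdotb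
      _ ≤ eps * (l1 (xhat - xbar) + l1 (xstar - xbar)) :=
          mul_le_mul_of_nonneg_left htri heps0
      _ ≤ _ := mul_le_mul_of_nonneg_left hsum heps0
  have hfin : eps * ((1 + gam) * ((lam + eps + ν) * sb / ρ)
        + (1 + gam) * ((lam + 0 + ν) * sb / ρ))
      ≤ 4 * (1 + gam) * lam * sb * eps / ρ := by
    have hrw : eps * ((1 + gam) * ((lam + eps + ν) * sb / ρ)
        + (1 + gam) * ((lam + 0 + ν) * sb / ρ))
        = eps * ((1 + gam) * ((lam + eps + ν) * sb) + (1 + gam) * ((lam + 0 + ν) * sb)) / ρ := by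
      ring
    rw [hrw]
    have h2l : 0 ≤ 2 * lam - eps - 2 * ν := by nlinarith
    have hkey2 : 0 ≤ (1 + gam) * sb * eps * (2 * lam - eps - 2 * ν) := by
      apply mul_nonneg
      apply mul_nonneg
      exact mul_nonneg h1g hsb0
      exact heps0
      exact h2l
    have hXY : eps * ((1 + gam) * ((lam + eps + ν) * sb) + (1 + gam) * ((lam + 0 + ν) * sb))
        ≤ 4 * (1 + gam) * lam * sb * eps := by nlinarith [hkey2]
    exact div_le_div_of_nonneg_right hXY hrho.le
  exact hstep.trans hfin

end PGH
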